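/- (m=2 sign-flip bound) Let k, n with k+2 ≤ n, Z an n×(k+2) matrix with positive maximal minors, and Y ∈ Gr(k, k+2) arbitrary (Y = CZ for some real k×n matrix C). Then the number of sign changes (ignoring zeros) of the sequence (⟨Y, 1, i⟩)_{i=2,...,n} is at most k. -/

import Mathlib

/-- Twistor coordinate. -/
noncomputable def twistor {k m n : ℕ} (Z : Matrix (Fin n) (Fin (k + m)) ℝ)
    (Y : Matrix (Fin k) (Fin (k + m)) ℝ) (L : Fin m → Fin n) : ℝ :=
  Matrix.det (Matrix.of fun i j : Fin k ⊕ Fin m =>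
    Sum.elim (fun a => Y a) (fun b => Z (L b)) i (finSumFinEquiv j))

def PosMaximalMinors {n p : ℕ} (Z : Matrix (Fin n) (Fin p) ℝ) : Prop :=
  ∀ f : Fin p → Fin n, StrictMono f → 0 < Matrix.det (Matrix.of fun a b => Z (f a) b)

/-- The number of sign changes of a list of reals, ignoring zeros. -/
noncomputable def signFlips (l : List ℝ) : ℕ :=
  let l' := l.filter fun x => decide (x ≠ 0)
  (l'.zip l'.tail).countP fun p => decide (p.1 * p.2 < 0)

lemma cofactor_rel {p : ℕ} (B : Matrix (Fin (p+1)) (Fin p) ℝ) (j : Fin p) :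
    ∑ i : Fin (p+1), (-1:ℝ)^(i:ℕ) * (B.submatrix i.succAbove id).det * B i j = 0 := by
  set M : Matrix (Fin (p+1)) (Fin (p+1)) ℝ :=
    Matrix.of fun (r c : Fin (p+1)) => (Fin.cons (B r j) (B r) : Fin (p+1) → ℝ) c with hM
  have h0 : M.det = 0 := by
    apply Matrix.det_zero_of_column_eq (i := 0) (j := j.succ)
    · exact (Fin.succ_ne_zero j).symm
    · intro r; simp [hM]
  have h1 := Matrix.det_succ_column_zero M
  rw [h0] at h1
  have h2 : ∀ i : Fin (p+1), (M.submatrix i.succAbove Fin.succ) = B.submatrix i.succAbove id := by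
    intro i; ext r c; simp [hM]
  calc ∑ i : Fin (p+1), (-1:ℝ)^(i:ℕ) * (B.submatrix i.succAbove id).det * B i j
      = ∑ i : Fin (p+1), (-1:ℝ)^(i:ℕ) * M i 0 * (M.submatrix i.succAbove Fin.succ).det := by
        apply Finset.sum_congr rfl; intro i _; rw [h2]; simp [hM]; ring
    _ = 0 := h1.symm

lemma det_updateRow_eq_sum {ι : Type*} [Fintype ι] [DecidableEq ι]
    (N : Matrix ι ι ℝ) (r : ι) (u : ι → ℝ) :
    (N.updateRow r u).det = ∑ c, u c * (N.updateRow r (Pi.single c 1)).det := by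
  let L : (ι → ℝ) →ₗ[ℝ] ℝ :=
    { toFun := fun u => (N.updateRow r u).det
      map_add' := Matrix.det_updateRow_add N r
      map_smul' := by intro s u; simp [Matrix.det_updateRow_smul] }
  have hu : u = ∑ c, u c • (Pi.single c 1 : ι → ℝ) := by
    ext x
    simp [Pi.single_apply, Finset.sum_apply, mul_ite]
  calc (N.updateRow r u).det = L u := rfl
    _ = ∑ c, u c * L (Pi.single c 1) := by
        conv_lhs => rw [hu]
        rw [map_sum]
        exact Finset.sum_congr rfl fun c _ => by rw [map_smul]; simp
    _ = _ := rfl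

lemma twistor_linear {k n : ℕ} (Z : Matrix (Fin n) (Fin (k+2)) ℝ)
    (Y : Matrix (Fin k) (Fin (k+2)) ℝ) (a : Fin n) :
    ∃ v : Fin (k+2) → ℝ, ∀ i : Fin n, twistor Z Y ![a, i] = ∑ j, Z i j * v j := by
  classical
  set σ : Fin k ⊕ Fin 2 ≃ Fin (k+2) := finSumFinEquiv
  set N : Matrix (Fin k ⊕ Fin 2) (Fin k ⊕ Fin 2) ℝ :=
    Matrix.of fun r c => Sum.elim (fun a' => Y a') ![Z a, 0] r (σ c) with hN
  have key : ∀ w : Fin (k+2) → ℝ,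
      (Matrix.of fun r c => Sum.elim (fun a' => Y a') ![Z a, w] r (σ c)).det
      = (N.updateRow (Sum.inr 1) (fun c => w (σ c))).det := by
    intro w
    congr 1
    ext r c
    rcases r with r | r
    · simp [hN, Matrix.updateRow_apply]
    · fin_cases r <;> simp [hN, Matrix.updateRow_apply]
  refine ⟨fun j => (N.updateRow (Sum.inr 1)
      (fun c => (Pi.single j 1 : Fin (k+2) → ℝ) (σ c))).det, fun i => ?_⟩
  have hT : twistor Z Y ![a, i]
      = (Matrix.of fun r c => Sum.elim (fun a' => Y a') ![Z a, Z i] r (σ c)).det := by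
    unfold twistor
    congr 1
    ext r c
    rcases r with r | r
    · rfl
    · fin_cases r <;> rfl
  rw [hT, key, det_updateRow_eq_sum]
  rw [← Equiv.sum_comp σ (fun j => Z i j * (N.updateRow (Sum.inr 1) (fun c => (Pi.single j 1 : Fin (k+2) → ℝ) (σ c))).det)]
  refine Finset.sum_congr rfl fun c _ => ?_
  congr 2
  ext c'
  simp [Matrix.updateRow_apply, Pi.single_apply, σ.injective.eq_iff]

lemma twistor_diag_zero {k n : ℕ} (Z : Matrix (Fin n) (Fin (k+2)) ℝ)
    (Y : Matrix (Fin k) (Fin (k+2)) ℝ) (a : Fin n) :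
    twistor Z Y ![a, a] = 0 := by
  apply Matrix.det_zero_of_row_eq (i := Sum.inr 0) (j := Sum.inr 1)
  · simp
  · ext c; simp

lemma altSub : ∀ (t : List ℝ) (x : ℝ), (∀ a ∈ x::t, a ≠ 0) →
    ∃ s : List ℝ, (x::s).Sublist (x::t) ∧
      (x::s).length = ((x::t).zip t).countP (fun q => decide (q.1*q.2<0)) + 1 ∧
      (x::s).Chain' (fun a b => a*b < 0) := by
  intro t
  induction t with
  | nil =>
    intro x hx
    exact ⟨[], List.Sublist.refl _, by simp, List.isChain_singleton _⟩
  | cons y t' IH =>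
    intro x hx
    have hy : ∀ a ∈ y::t', a ≠ 0 := fun a ha => hx a (List.mem_cons_of_mem _ ha)
    obtain ⟨s, hsub, hlen, hch⟩ := IH y hy
    have hzip : ((x::y::t').zip (y::t')) = (x,y) :: ((y::t').zip t') := rfl
    by_cases hxy : x * y < 0
    · refine ⟨y::s, List.Sublist.cons₂ x hsub, ?_, ?_⟩
      · rw [hzip, List.countP_cons]
        simp only [hxy, decide_true]
        simp only [if_true]
        simp only [List.length_cons] at hlen ⊢
        omega
      · exact List.isChain_cons_cons.mpr ⟨hxy, hch⟩
    · have hs' : s.Sublist (y::t') :=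
        (List.cons_sublist_cons.mp hsub).trans (List.sublist_cons_self y t')
      refine ⟨s, List.Sublist.cons₂ x hs', ?_, ?_⟩
      · rw [hzip, List.countP_cons]
        simp only [hxy, decide_false]
        simpa using hlen
      · cases s with
        | nil => exact List.isChain_singleton _
        | cons z s'' =>
          have hyz : y * z < 0 := (List.isChain_cons_cons.mp hch).1
          have hch' := (List.isChain_cons_cons.mp hch).2
          have hx0 : x ≠ 0 := hx x List.mem_cons_self
          have hy0 : y ≠ 0 := hy y List.mem_cons_self
          have hxy' : 0 < x * y := by
            rcases lt_trichotomy (x*y) 0 with h|h|h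
            · exact absurd h hxy
            · exact absurd h (mul_ne_zero hx0 hy0)
            · exact h
          have : x * z < 0 := by nlinarith [sq_nonneg y, mul_pos hxy' hxy']
          exact List.isChain_cons_cons.mpr ⟨this, hch'⟩

/-- `m = 2` sign-flip bound: for `Z` an `n × (k+2)` matrix with positive maximal minors and
`Y = C Z` for an arbitrary real `k × n` matrix `C`, the sequence `(⟨Y, 1, i⟩)_{i = 2, …, n}`
changes sign at most `k` times (ignoring zeros). -/
theorem stmt18 (k n : ℕ) (hmn : k + 2 ≤ n)
    (Z : Matrix (Fin n) (Fin (k + 2)) ℝ) (hZ : PosMaximalMinors Z)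
    (C : Matrix (Fin k) (Fin n) ℝ) :
    signFlips (((List.finRange n).drop 1).map fun i =>
        twistor Z (C * Z) ![(⟨0, by omega⟩ : Fin n), i]) ≤ k := by
  classical
  set z0 : Fin n := ⟨0, by omega⟩ with hz0def
  set f : Fin n → ℝ := fun i => twistor Z (C * Z) ![z0, i] with hfdef
  set L : List (Fin n) := (List.finRange n).drop 1 with hLdef
  set l : List ℝ := L.map f with hldef
  by_contra hcon
  push_neg at hcon
  -- l' nonempty
  set l' : List ℝ := l.filter (fun x => decide (x ≠ 0)) with hl'def
  have hsf : signFlips l = (l'.zip l'.tail).countP fun p => decide (p.1 * p.2 < 0) := rfl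
  obtain ⟨x, t, hxt⟩ : ∃ x t, l' = x :: t := by
    cases h : l' with
    | nil => rw [hsf, h] at hcon; simp at hcon
    | cons x t => exact ⟨x, t, rfl⟩
  have hnz : ∀ a ∈ x :: t, a ≠ 0 := by
    intro a ha
    rw [← hxt] at ha
    have := List.of_mem_filter ha
    simpa using this
  obtain ⟨s, hsub, hlen, hch⟩ := altSub t x hnz
  -- s0 is a sublist of l = map f L
  have hs0l : (x::s).Sublist l := (hxt ▸ hsub).trans (List.filter_sublist (l := l))
  obtain ⟨L0, hL0sub, hL0map⟩ := List.sublist_map_iff.mp hs0l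
  have hL0len : L0.length = (x::s).length := by rw [hL0map]; simp
  have hslen : k + 2 ≤ (x::s).length := by
    rw [hxt] at hsf
    simp only [List.tail_cons] at hsf
    omega
  -- take k+2 elements
  set L1 : List (Fin n) := L0.take (k+2) with hL1def
  have hL1len : L1.length = k + 2 := by
    rw [hL1def, List.length_take]
    omega
  set s1 : List ℝ := (x::s).take (k+2) with hs1def
  have hs1map : L1.map f = s1 := by
    rw [hL1def, hs1def, List.map_take, ← hL0map]
  have hs1len : s1.length = k + 2 := by
    rw [hs1def, List.length_take]; omega
  have hs1ch : s1.Chain' (fun a b => a*b < 0) := hch.take _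
  have hL1subL : L1.Sublist L := (List.take_sublist _ _).trans hL0sub
  -- all elements of L are > z0
  have hLgt : ∀ i ∈ L, z0 < i := by
    intro i hi
    obtain ⟨j, hj, hji⟩ := List.getElem_of_mem hi
    have hval : (i : ℕ) = 1 + j := by
      rw [← hji]
      show ((List.drop 1 (List.finRange n))[j]'hj : Fin n).val = 1 + j
      rw [List.getElem_drop, List.getElem_finRange]
      rfl
    rw [Fin.lt_def, hval]
    show (0:ℕ) < 1 + j
    omega
  have hLpw : L.Pairwise (· < ·) :=
    (List.pairwise_lt_finRange n).sublist (List.drop_sublist 1 _)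
  -- assemble index list
  set A : List (Fin n) := z0 :: L1 with hAdef
  have hAlen : A.length = k + 3 := by rw [hAdef, List.length_cons, hL1len]
  have hApw : A.Pairwise (· < ·) := by
    rw [hAdef, List.pairwise_cons]
    exact ⟨fun i hi => hLgt i (hL1subL.subset hi), hLpw.sublist hL1subL⟩
  set a : Fin (k+3) → Fin n := fun t => A.get (Fin.cast hAlen.symm t) with hadef
  have hamono : StrictMono a := by
    intro u v huv
    exact List.pairwise_iff_get.mp hApw _ _ huv
  -- twistor linear
  obtain ⟨v, hv⟩ := twistor_linear Z (C * Z) z0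
  set B : Matrix (Fin (k+3)) (Fin (k+2)) ℝ := Z.submatrix a id with hBdef
  set d : Fin (k+3) → ℝ := fun i => (B.submatrix i.succAbove id).det with hddef
  have hdpos : ∀ i, 0 < d i := by
    intro i
    have : StrictMono (a ∘ i.succAbove) := hamono.comp (Fin.strictMono_succAbove i)
    have h := hZ (a ∘ i.succAbove) this
    convert h using 2
    rfl
  set g : Fin (k+3) → ℝ := fun t => f (a t) with hgdef
  -- the vanishing sum
  have hS : ∑ i : Fin (k+3), (-1:ℝ)^(i:ℕ) * d i * g i = 0 := by
    have hgi : ∀ i, g i = ∑ j, B i j * v j := by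
      intro i
      rw [hgdef]
      exact hv (a i)
    calc ∑ i : Fin (k+3), (-1:ℝ)^(i:ℕ) * d i * g i
        = ∑ i : Fin (k+3), ∑ j, ((-1:ℝ)^(i:ℕ) * d i * B i j) * v j := by
          refine Finset.sum_congr rfl fun i _ => ?_
          rw [hgi, Finset.mul_sum]
          exact Finset.sum_congr rfl fun j _ => by ring
      _ = ∑ j, (∑ i : Fin (k+3), (-1:ℝ)^(i:ℕ) * d i * B i j) * v j := by
          rw [Finset.sum_comm]
          exact Finset.sum_congr rfl fun j _ => (Finset.sum_mul _ _ _).symm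
      _ = 0 := by
          refine Finset.sum_eq_zero fun j _ => ?_
          rw [cofactor_rel B j, zero_mul]
  -- values of g
  set gg : ℕ → ℝ := fun t => if h : t < k+3 then g ⟨t, h⟩ else 0 with hggdef
  have hgg : ∀ (t : ℕ) (h : t < k+3), gg t = g ⟨t, h⟩ := fun t h => dif_pos h
  have hg0 : gg 0 = 0 := by
    rw [hgg 0 (by omega)]
    have ha0 : a 0 = z0 := rfl
    show f (a 0) = 0
    rw [ha0, hfdef]
    exact twistor_diag_zero Z (C*Z) z0
  have hgs : ∀ (t : ℕ) (ht : t < k + 2),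
      gg (t+1) = s1[t]'(by omega) := by
    intro t ht
    rw [hgg (t+1) (by omega)]
    have hL1t : t < L1.length := by omega
    have e0 : a ⟨t+1, by omega⟩ = L1[t]'hL1t := by
      show A.get _ = _
      rw [List.get_eq_getElem]
      show (z0::L1)[t+1]'(by rw [List.length_cons, hL1len]; omega) = _
      exact List.getElem_cons_succ ..
    have e1 : g ⟨t+1, by omega⟩ = f (L1[t]'hL1t) := by
      show f (a ⟨t+1, by omega⟩) = _
      rw [e0]
    rw [e1, ← List.getElem_map (f := f) (l := L1) (h := by simpa using hL1t)]
    exact List.getElem_of_eq hs1map _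
  have hchain : ∀ (t : ℕ) (ht1 : 1 ≤ t) (ht : t + 1 ≤ k + 2),
      gg t * gg (t+1) < 0 := by
    intro t ht1 ht
    obtain ⟨u, rfl⟩ : ∃ u, t = u + 1 := ⟨t - 1, by omega⟩
    have h := List.isChain_iff_getElem.mp hs1ch u (by omega)
    rw [hgs u (by omega), hgs (u+1) (by omega)]
    exact h
  -- sign argument
  have hg1ne : gg 1 ≠ 0 := by
    intro h
    have := hchain 1 (by omega) (by omega)
    rw [h] at this
    simp at this
  set ε : ℝ := if 0 < -gg 1 then 1 else -1 with hεdef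
  have hε1 : 0 < ε * ((-1:ℝ)^(1:ℕ) * gg 1) := by
    rw [hεdef]
    rcases lt_trichotomy (gg 1) 0 with h|h|h
    · rw [if_pos (by linarith)]; simpa using h
    · exact absurd h hg1ne
    · rw [if_neg (by linarith)]; simpa using h
  have hkey : ∀ (t : ℕ), 1 ≤ t → t ≤ k + 2 →
      0 < ε * ((-1:ℝ)^t * gg t) := by
    intro t
    induction t with
    | zero => omega
    | succ m IH =>
      intro _ hm
      rcases Nat.eq_or_lt_of_le (Nat.one_le_iff_ne_zero.mpr (by omega) : 1 ≤ m+1) with h1|h1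
      · rw [← h1]
        exact hε1
      · have hm1 : 1 ≤ m := by omega
        have hIH := IH hm1 (by omega)
        have hcc := hchain m hm1 (by omega)
        have hε2 : ε^2 = 1 := by
          rw [hεdef]; split <;> norm_num
        have hA2 : ((-1:ℝ)^m)^2 = 1 := by
          rw [← pow_mul, mul_comm, pow_mul]; norm_num
        have hpw : (-1:ℝ)^(m+1) = -(-1:ℝ)^m := by ring
        rw [hpw]
        have hx : gg m ≠ 0 := by
          intro h; rw [h] at hcc; simp at hcc
        have h1 : 0 < (ε*(-1:ℝ)^m) * gg m := by linear_combination hIH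
        have h2 : ((ε*(-1:ℝ)^m) * gg m) * (gg m * gg (m+1)) < 0 :=
          mul_neg_of_pos_of_neg h1 hcc
        have hx2 : 0 < gg m * gg m := mul_self_pos.mpr hx
        nlinarith [h2, hx2, hε2, hA2]
  -- derive contradiction
  have hgfin : ∀ i : Fin (k+3), g i = gg (i:ℕ) := by
    intro i
    rw [hgg (i:ℕ) i.isLt]
  have hterm : ∀ i : Fin (k+3), 0 ≤ d i * (ε * ((-1:ℝ)^(i:ℕ) * g i)) := by
    intro i
    rw [hgfin i]
    rcases Nat.eq_zero_or_pos (i:ℕ) with h0|h0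
    · rw [h0, hg0]; simp
    · have hle : (i:ℕ) ≤ k + 2 := by omega
      exact le_of_lt (mul_pos (hdpos i) (hkey (i:ℕ) h0 hle))
  have hterm1 : 0 < d ⟨1, by omega⟩ * (ε * ((-1:ℝ)^((⟨1, by omega⟩ : Fin (k+3)):ℕ) * g ⟨1, by omega⟩)) := by
    rw [hgfin ⟨1, by omega⟩]
    exact mul_pos (hdpos _) hε1
  have hpos : 0 < ∑ i : Fin (k+3), d i * (ε * ((-1:ℝ)^(i:ℕ) * g i)) :=
    Finset.sum_pos' (fun i _ => hterm i) ⟨⟨1, by omega⟩, Finset.mem_univ _, hterm1⟩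
  have heq : ∑ i : Fin (k+3), d i * (ε * ((-1:ℝ)^(i:ℕ) * g i))
      = ε * ∑ i : Fin (k+3), (-1:ℝ)^(i:ℕ) * d i * g i := by
    rw [Finset.mul_sum]
    exact Finset.sum_congr rfl fun i _ => by ring
  rw [heq, hS, mul_zero] at hpos
  exact lt_irrefl 0 hpos
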